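/- arXiv:1807.01041 — 4 statements merged into one kernel-verified Lean document; each statement's English description precedes it below -/
import Mathlib

section
/- Let G be an abelian group, H a subgroup of G, and F an abelian group. If τ' : H × H → F is a symmetric 2-cocycle, then there exists a symmetric 2-cocycle τ : G × G → F whose restriction to H × H equals τ'. -/
open CategoryTheory

def ExtGrp (F H : Type u) : Type u := F × H

theorem extend_hom {A B J : Type u} [AddCommGroup A] [AddCommGroup B] [AddCommGroup J]
    [Injective (AddCommGrpCat.of J)]
    (f : A →+ B) (hf : Function.Injective f) (g : A →+ J) :
    ∃ h : B →+ J, ∀ a, h (f a) = g a := by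
  haveI : Mono (AddCommGrpCat.ofHom f) := (AddCommGrpCat.mono_iff_injective _).mpr hf
  refine ⟨(Injective.factorThru (AddCommGrpCat.ofHom g) (AddCommGrpCat.ofHom f)).hom, fun a => ?_⟩
  exact congrArg (fun φ => φ.hom a) (Injective.comp_factorThru (AddCommGrpCat.ofHom g) (AddCommGrpCat.ofHom f))

theorem aux_additive {G F : Type u} [AddCommGroup G] [AddCommGroup F] (H : AddSubgroup G)
    (τ' : H → H → F)
    (hcoc : ∀ a b c : H, τ' a b + τ' (a + b) c = τ' a (b + c) + τ' b c)
    (hsym : ∀ a b : H, τ' a b = τ' b a) :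
    ∃ τ : G → G → F,
      (∀ a b c : G, τ a b + τ (a + b) c = τ a (b + c) + τ b c) ∧
      (∀ a b : G, τ a b = τ b a) ∧
      (∀ h₁ h₂ : H, τ h₁ h₂ = τ' h₁ h₂) := by
  classical
  have htz : ∀ a : H, τ' 0 a = τ' 0 0 := by
    intro a
    have h := hcoc 0 0 a
    rw [zero_add, zero_add] at h
    exact (add_right_cancel h).symm
  -- the extension group E of H by F determined by τ'
  letI : Add (ExtGrp F H) := ⟨fun x y => ⟨x.1 + y.1 + τ' x.2 y.2, x.2 + y.2⟩⟩
  letI : Zero (ExtGrp F H) := ⟨⟨-τ' 0 0, 0⟩⟩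
  letI : Neg (ExtGrp F H) := ⟨fun x => ⟨-x.1 - τ' x.2 (-x.2) - τ' 0 0, -x.2⟩⟩
  have hadd : ∀ x y : ExtGrp F H, x + y = ⟨x.1 + y.1 + τ' x.2 y.2, x.2 + y.2⟩ := fun _ _ => rfl
  have hzero : (0 : ExtGrp F H) = ⟨-τ' 0 0, 0⟩ := rfl
  have hneg : ∀ x : ExtGrp F H, -x = ⟨-x.1 - τ' x.2 (-x.2) - τ' 0 0, -x.2⟩ := fun _ => rfl
  letI grpE : AddGroup (ExtGrp F H) := AddGroup.ofLeftAxioms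
    (by
      intro x y z
      rw [hadd, hadd, hadd, hadd]
      refine Prod.ext ?_ (add_assoc _ _ _)
      show x.1 + y.1 + τ' x.2 y.2 + z.1 + τ' (x.2 + y.2) z.2
        = x.1 + (y.1 + z.1 + τ' y.2 z.2) + τ' x.2 (y.2 + z.2)
      have := hcoc x.2 y.2 z.2
      -- rearrange
      calc x.1 + y.1 + τ' x.2 y.2 + z.1 + τ' (x.2 + y.2) z.2
          = x.1 + y.1 + z.1 + (τ' x.2 y.2 + τ' (x.2 + y.2) z.2) := by abel
        _ = x.1 + y.1 + z.1 + (τ' x.2 (y.2 + z.2) + τ' y.2 z.2) := by rw [this]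
        _ = x.1 + (y.1 + z.1 + τ' y.2 z.2) + τ' x.2 (y.2 + z.2) := by abel)
    (by
      intro x
      erw [hzero, hadd]
      refine Prod.ext ?_ (zero_add _)
      show -τ' 0 0 + x.1 + τ' 0 x.2 = x.1
      rw [htz x.2]; abel)
    (by
      intro x
      erw [hneg, hadd, hzero]
      refine Prod.ext ?_ (neg_add_cancel _)
      show -x.1 - τ' x.2 (-x.2) - τ' 0 0 + x.1 + τ' (-x.2) x.2 = -τ' 0 0
      rw [hsym (-x.2) x.2]; abel)
  letI : AddCommGroup (ExtGrp F H) := { grpE with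
    add_comm := by
      intro x y
      rw [hadd, hadd]
      exact Prod.ext (by rw [hsym x.2 y.2]; abel) (add_comm _ _) }
  -- the embedding of F into E
  let ι : F →+ ExtGrp F H := AddMonoidHom.mk' (fun f => ⟨f - τ' 0 0, 0⟩)
    (by
      intro a b
      erw [hadd]
      refine Prod.ext ?_ (zero_add _).symm
      show a + b - τ' 0 0 = a - τ' 0 0 + (b - τ' 0 0) + τ' 0 0
      abel)
  have hι : ∀ f, ι f = (⟨f - τ' 0 0, 0⟩ : ExtGrp F H) := fun _ => rfl
  have hιinj : Function.Injective ι := by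
    intro a b h
    rw [hι, hι] at h
    have := congrArg Prod.fst h
    simpa using this
  -- the set-theoretic section and its defect
  let s : H → ExtGrp F H := fun c => show ExtGrp F H from ⟨0, c⟩
  have hιs : ∀ (x : F) (c : H), ι x + s c = (show ExtGrp F H from ⟨x, c⟩) := by
    intro x c
    erw [hι, hadd]
    refine Prod.ext ?_ (zero_add _)
    show x - τ' 0 0 + 0 + τ' 0 c = x
    rw [htz c]; abel
  have hs : ∀ a b : H, s a + s b = ι (τ' a b) + s (a + b) := by
    intro a b
    rw [hadd, hιs]
    exact Prod.ext (by show (0:F) + 0 + τ' a b = τ' a b; abel) rfl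
  -- the injective abelian group J and the embedding j : F → J
  let J : Type u := CharacterModule F → ULift.{u} (AddCircle (1 : ℚ))
  let j : F →+ J := AddMonoidHom.mk' (fun a c => ULift.up (c a))
    (by
      intro a b
      funext c
      show ULift.up (c (a + b)) = ULift.up (c a) + ULift.up (c b)
      rw [map_add]
      rfl)
  have hjinj : Function.Injective j := by
    rw [injective_iff_map_eq_zero]
    intro a ha
    refine CharacterModule.eq_zero_of_character_apply (fun c => ?_)
    have := congrFun ha c
    exact congrArg ULift.down this
  -- retraction r : E → J with r ∘ ι = j
  haveI : Injective (AddCommGrpCat.of J) := AddCommGrpCat.injective_of_divisible _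
  obtain ⟨r, hr⟩ := extend_hom ι hιinj j
  -- φ : H → J with dφ = j ∘ τ'
  let φ : H → J := fun a => r (s a)
  have hdφ : ∀ a b : H, φ a + φ b = j (τ' a b) + φ (a + b) := by
    intro a b
    have := congrArg r (hs a b)
    rw [map_add, map_add] at this
    rw [hr] at this
    exact this
  -- the quotient Q = J / j(F)
  let Q := J ⧸ j.range
  let π : J →+ Q := QuotientAddGroup.mk' j.range
  have hπj : ∀ f : F, π (j f) = 0 := by
    intro f
    exact (QuotientAddGroup.eq_zero_iff _).mpr ⟨f, rfl⟩
  let ψ : H →+ Q := AddMonoidHom.mk' (fun a => π (φ a))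
    (by
      intro a b
      have := congrArg π (hdφ a b)
      rw [map_add, map_add, hπj, zero_add] at this
      exact this.symm)
  -- Q is divisible hence injective
  haveI : DivisibleBy J ℕ := AddGroup.divisibleByNatOfDivisibleByInt _
  haveI : DivisibleBy Q ℕ := QuotientAddGroup.divisibleBy _
  haveI : DivisibleBy Q ℤ := AddGroup.divisibleByIntOfDivisibleByNat _
  haveI : Injective (AddCommGrpCat.of Q) := AddCommGrpCat.injective_of_divisible _
  -- extend ψ to χ : G → Q
  obtain ⟨χ, hχ⟩ := extend_hom H.subtype H.subtype_injective ψ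
  -- lift χ to ℓ : G → J agreeing with φ on H
  have hπsurj : Function.Surjective π := QuotientAddGroup.mk'_surjective _
  let ℓ : G → J := fun g => if hg : g ∈ H then φ ⟨g, hg⟩ else Classical.choose (hπsurj (χ g))
  have hπℓ : ∀ g, π (ℓ g) = χ g := by
    intro g
    by_cases hg : g ∈ H
    · show π (ℓ g) = χ g
      rw [show ℓ g = φ ⟨g, hg⟩ from dif_pos hg]
      have : ψ ⟨g, hg⟩ = χ (H.subtype ⟨g, hg⟩) := (hχ _).symm
      exact this
    · rw [show ℓ g = Classical.choose (hπsurj (χ g)) from dif_neg hg]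
      exact Classical.choose_spec (hπsurj (χ g))
  have hℓH : ∀ h : H, ℓ h = φ h := by
    intro h
    show ℓ (h : G) = φ h
    rw [show ℓ (h : G) = φ ⟨(h : G), h.2⟩ from dif_pos h.2]
  -- the defect of ℓ lands in j(F)
  have hmem : ∀ a b : G, ∃ f : F, j f = ℓ a + ℓ b - ℓ (a + b) := by
    intro a b
    have : π (ℓ a + ℓ b - ℓ (a + b)) = 0 := by
      rw [map_sub, map_add, hπℓ, hπℓ, hπℓ, map_add, sub_self]
    obtain ⟨f, hf⟩ := (QuotientAddGroup.eq_zero_iff _).mp this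
    exact ⟨f, hf⟩
  refine ⟨fun a b => Classical.choose (hmem a b), ?_, ?_, ?_⟩
  · intro a b c
    apply hjinj
    rw [map_add, Classical.choose_spec (hmem a b), Classical.choose_spec (hmem (a+b) c),
      map_add, Classical.choose_spec (hmem a (b+c)), Classical.choose_spec (hmem b c),
      add_assoc a b c]
    abel
  · intro a b
    apply hjinj
    rw [Classical.choose_spec (hmem a b), Classical.choose_spec (hmem b a), add_comm a b,
      add_comm (ℓ a) (ℓ b)]
  · intro h₁ h₂
    apply hjinj
    rw [Classical.choose_spec (hmem h₁ h₂)]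
    have hsum : (h₁ : G) + (h₂ : G) = ((h₁ + h₂ : H) : G) := rfl
    rw [hsum, hℓH, hℓH, hℓH]
    have := hdφ h₁ h₂
    rw [this]; abel

/-- Any symmetric 2-cocycle on a subgroup `H` of an abelian group `G`, with values in an
abelian group `F`, extends to a symmetric 2-cocycle on all of `G`. -/
theorem symmetric_cocycle_extends {G F : Type*} [CommGroup G] [CommGroup F]
    (H : Subgroup G) (τ' : H → H → F)
    (hcoc : ∀ a b c : H, τ' a b * τ' (a * b) c = τ' a (b * c) * τ' b c)
    (hsym : ∀ a b : H, τ' a b = τ' b a) :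
    ∃ τ : G → G → F,
      (∀ a b c : G, τ a b * τ (a * b) c = τ a (b * c) * τ b c) ∧
      (∀ a b : G, τ a b = τ b a) ∧
      (∀ h₁ h₂ : H, τ h₁ h₂ = τ' h₁ h₂) := by
  classical
  -- move to additive groups in a common universe
  let G' := ULift.{max u_1 u_2} (Additive G)
  let F' := ULift.{max u_1 u_2} (Additive F)
  let H' : AddSubgroup G' :=
    { carrier := {x | Additive.toMul x.down ∈ H}
      add_mem' := fun ha hb => H.mul_mem ha hb
      zero_mem' := H.one_mem
      neg_mem' := fun ha => H.inv_mem ha }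
  let u : H' → H := fun a => ⟨Additive.toMul (a : G').down, a.2⟩
  let τ'' : H' → H' → F' := fun a b => ULift.up (Additive.ofMul (τ' (u a) (u b)))
  have hu : ∀ a b : H', u (a + b) = u a * u b := fun a b => rfl
  obtain ⟨τA, hA1, hA2, hA3⟩ := aux_additive H' τ''
    (by
      intro a b c
      show ULift.up (Additive.ofMul (τ' (u a) (u b) * τ' (u (a + b)) (u c)))
        = ULift.up (Additive.ofMul (τ' (u a) (u (b + c)) * τ' (u b) (u c)))
      rw [hu, hu]
      exact congrArg (fun x => ULift.up (Additive.ofMul x)) (hcoc (u a) (u b) (u c)))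
    (fun a b => congrArg (fun x => ULift.up (Additive.ofMul x)) (hsym (u a) (u b)))
  let eG : G → G' := fun g => ULift.up (Additive.ofMul g)
  refine ⟨fun a b => Additive.toMul (τA (eG a) (eG b)).down, ?_, ?_, ?_⟩
  · intro a b c
    exact congrArg (fun x => Additive.toMul x.down) (hA1 (eG a) (eG b) (eG c))
  · intro a b
    exact congrArg (fun x => Additive.toMul x.down) (hA2 (eG a) (eG b))
  · intro h₁ h₂
    have m₁ : eG h₁ ∈ H' := h₁.2
    have m₂ : eG h₂ ∈ H' := h₂.2
    have := hA3 ⟨eG h₁, m₁⟩ ⟨eG h₂, m₂⟩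
    have h2 := congrArg (fun x => Additive.toMul x.down) this
    exact h2
end

section
/- Let G be an abelian group, A = ⊕_{g∈G} A_g a G-graded algebra over a field F whose centroid is spanned by its homogeneous components, and τ : G × G → F^× a symmetric 2-cocycle. Then the map sending a homogeneous centroid element c of degree h to c^τ (where c^τ(x) = τ(h,g)c(x) for x ∈ A_g) is an isomorphism of G-graded algebras from C(A)^τ onto C(A^τ). In particular, for homogeneous c₁ ∈ C(A)_{h₁} and c₂ ∈ C(A)_{h₂}, one has c₁^τ ∘ c₂^τ = τ(h₁,h₂)(c₁∘c₂)^τ. -/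
section

variable {G F M : Type*} [CommGroup G] [Field F] [AddCommGroup M] [Module F M]

/-- `c` belongs to the centroid of the algebra `(M, mul)`. -/
def IsCentroidElem (mul : M →ₗ[F] M →ₗ[F] M) (c : M →ₗ[F] M) : Prop :=
  ∀ x y : M, c (mul x y) = mul (c x) y ∧ c (mul x y) = mul x (c y)

/-- `c` is homogeneous of degree `h` with respect to the grading `𝒜`. -/
def IsHomogOfDeg (𝒜 : G → Submodule F M) (h : G) (c : M →ₗ[F] M) : Prop :=
  ∀ g : G, ∀ x ∈ 𝒜 g, c x ∈ 𝒜 (h * g)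

/-- `cτ` is the τ-twist of the degree-`h` homogeneous centroid element `c`. -/
def IsTwistOf (𝒜 : G → Submodule F M) (τ : G → G → Fˣ) (h : G)
    (c cτ : M →ₗ[F] M) : Prop :=
  ∀ g : G, ∀ x ∈ 𝒜 g, cτ x = (τ h g : F) • c x

/-- Two linear maps agreeing on all homogeneous elements are equal. -/
lemma ext_of_homog {G' F' M' N' : Type*} [DecidableEq G'] [Field F'] [AddCommGroup M']
    [Module F' M'] [AddCommGroup N'] [Module F' N']
    (𝒜 : G' → Submodule F' M') [DirectSum.Decomposition 𝒜]
    {f₁ f₂ : M' →ₗ[F'] N'} (H : ∀ g : G', ∀ x ∈ 𝒜 g, f₁ x = f₂ x) : f₁ = f₂ := by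
  ext x
  refine DirectSum.Decomposition.inductionOn 𝒜 (motive := fun m => f₁ m = f₂ m) (by simp)
    (fun {i} m => H i m m.2) (fun m m' hm hm' => by simp [map_add, hm, hm']) x

/-- Two bilinear maps agreeing on all pairs of homogeneous elements are equal. -/
lemma ext2_of_homog {G' F' M' N' : Type*} [DecidableEq G'] [Field F'] [AddCommGroup M']
    [Module F' M'] [AddCommGroup N'] [Module F' N']
    (𝒜 : G' → Submodule F' M') [DirectSum.Decomposition 𝒜]
    {f₁ f₂ : M' →ₗ[F'] M' →ₗ[F'] N'}
    (H : ∀ g₁ g₂ : G', ∀ x ∈ 𝒜 g₁, ∀ y ∈ 𝒜 g₂, f₁ x y = f₂ x y) : f₁ = f₂ :=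
  ext_of_homog 𝒜 fun g₁ x hx => ext_of_homog 𝒜 fun g₂ y hy => H g₁ g₂ x hx y hy

/-- To check the centroid identities it suffices to check them on homogeneous pairs. -/
lemma isCentroid_of_homog {G' F' M' : Type*} [DecidableEq G'] [Field F'] [AddCommGroup M']
    [Module F' M'] (𝒜 : G' → Submodule F' M') [DirectSum.Decomposition 𝒜]
    (mul : M' →ₗ[F'] M' →ₗ[F'] M') (c : M' →ₗ[F'] M')
    (H : ∀ g₁ g₂ : G', ∀ x ∈ 𝒜 g₁, ∀ y ∈ 𝒜 g₂,
      c (mul x y) = mul (c x) y ∧ c (mul x y) = mul x (c y)) :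
    ∀ x y : M', c (mul x y) = mul (c x) y ∧ c (mul x y) = mul x (c y) := by
  have h1 : mul.compr₂ c = mul ∘ₗ c := ext2_of_homog 𝒜 fun g₁ g₂ x hx y hy => by
    simpa using (H g₁ g₂ x hx y hy).1
  have h2 : mul.compr₂ c = mul.compl₂ c := ext2_of_homog 𝒜 fun g₁ g₂ x hx y hy => by
    simpa using (H g₁ g₂ x hx y hy).2
  intro x y
  exact ⟨by simpa using LinearMap.congr_fun (LinearMap.congr_fun h1 x) y,
         by simpa using LinearMap.congr_fun (LinearMap.congr_fun h2 x) y⟩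

/-- The map `c ↦ c^τ` is a graded isomorphism `C(A)^τ → C(A^τ)`: it sends
homogeneous centroid elements of `A` of degree `h` to homogeneous centroid elements of
`A^τ` of degree `h`, bijectively, and satisfies `c₁^τ ∘ c₂^τ = τ(h₁,h₂)·(c₁∘c₂)^τ`. -/
theorem centroid_of_twist {G F M : Type*} [CommGroup G] [DecidableEq G] [Field F]
    [AddCommGroup M] [Module F M]
    (𝒜 : G → Submodule F M) [DirectSum.Decomposition 𝒜]
    (mul : M →ₗ[F] M →ₗ[F] M)
    (hgr : ∀ g₁ g₂ : G, ∀ x ∈ 𝒜 g₁, ∀ y ∈ 𝒜 g₂, mul x y ∈ 𝒜 (g₁ * g₂))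
    (hspan : ∀ c : M →ₗ[F] M, IsCentroidElem mul c →
      c ∈ Submodule.span F {c' : M →ₗ[F] M | ∃ h : G,
        IsCentroidElem mul c' ∧ IsHomogOfDeg 𝒜 h c'})
    (τ : G → G → Fˣ)
    (hcoc : ∀ g₁ g₂ g₃ : G, τ g₁ g₂ * τ (g₁ * g₂) g₃ = τ g₁ (g₂ * g₃) * τ g₂ g₃)
    (hsym : ∀ g₁ g₂ : G, τ g₁ g₂ = τ g₂ g₁)
    (mulτ : M →ₗ[F] M →ₗ[F] M)
    (hτ : ∀ g₁ g₂ : G, ∀ x ∈ 𝒜 g₁, ∀ y ∈ 𝒜 g₂,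
      mulτ x y = (τ g₁ g₂ : F) • mul x y) :
    -- the map `c ↦ c^τ` sends `C(A)_h` into `C(A^τ)_h` ...
    (∀ (h : G) (c cτ : M →ₗ[F] M), IsCentroidElem mul c → IsHomogOfDeg 𝒜 h c →
      IsTwistOf 𝒜 τ h c cτ → IsCentroidElem mulτ cτ ∧ IsHomogOfDeg 𝒜 h cτ) ∧
    -- ... injectively ...
    (∀ (h : G) (c₁ c₂ cτ : M →ₗ[F] M), IsCentroidElem mul c₁ → IsCentroidElem mul c₂ →
      IsHomogOfDeg 𝒜 h c₁ → IsHomogOfDeg 𝒜 h c₂ →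
      IsTwistOf 𝒜 τ h c₁ cτ → IsTwistOf 𝒜 τ h c₂ cτ → c₁ = c₂) ∧
    -- ... and onto: every homogeneous centroid element of `A^τ` is a twist ...
    (∀ (h : G) (c' : M →ₗ[F] M), IsCentroidElem mulτ c' → IsHomogOfDeg 𝒜 h c' →
      ∃ c : M →ₗ[F] M, IsCentroidElem mul c ∧ IsHomogOfDeg 𝒜 h c ∧
        IsTwistOf 𝒜 τ h c c') ∧
    -- ... and it is multiplicative up to the twist: `c₁^τ ∘ c₂^τ = τ(h₁,h₂)·(c₁∘c₂)^τ`.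
    (∀ (h₁ h₂ : G) (c₁ c₂ cτ₁ cτ₂ d : M →ₗ[F] M),
      IsCentroidElem mul c₁ → IsCentroidElem mul c₂ →
      IsHomogOfDeg 𝒜 h₁ c₁ → IsHomogOfDeg 𝒜 h₂ c₂ →
      IsTwistOf 𝒜 τ h₁ c₁ cτ₁ → IsTwistOf 𝒜 τ h₂ c₂ cτ₂ →
      IsTwistOf 𝒜 τ (h₁ * h₂) (c₁ ∘ₗ c₂) d →
      cτ₁ ∘ₗ cτ₂ = (τ h₁ h₂ : F) • d) := by
  refine ⟨?_, ?_, ?_, ?_⟩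
  · -- Part 1: c^τ is a homogeneous centroid element of A^τ
    intro h c cτ hc hch htw
    refine ⟨isCentroid_of_homog 𝒜 mulτ cτ ?_, fun g x hx => ?_⟩
    · intro g₁ g₂ x hx y hy
      have hxy := hgr g₁ g₂ x hx y hy
      have hcx := hch g₁ x hx
      have hcy := hch g₂ y hy
      have e1 : cτ (mulτ x y) = ((τ g₁ g₂ : F) * (τ h (g₁ * g₂) : F)) • c (mul x y) := by
        rw [hτ g₁ g₂ x hx y hy, map_smul, htw (g₁ * g₂) _ hxy, smul_smul]
      constructor
      · rw [e1, (hc x y).1, htw g₁ x hx, map_smul, LinearMap.smul_apply,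
          hτ (h * g₁) g₂ _ hcx y hy, smul_smul]
        congr 1
        have h2 : τ h g₁ * τ (h * g₁) g₂ = τ g₁ g₂ * τ h (g₁ * g₂) := by
          rw [hcoc h g₁ g₂, mul_comm]
        exact_mod_cast h2.symm
      · rw [e1, (hc x y).2, htw g₂ y hy, map_smul, hτ g₁ (h * g₂) x hx _ hcy, smul_smul]
        congr 1
        have h2 : τ h g₂ * τ g₁ (h * g₂) = τ g₁ g₂ * τ h (g₁ * g₂) := by
          rw [hsym g₁ (h * g₂), hcoc h g₂ g₁, mul_comm g₂ g₁, hsym g₂ g₁, mul_comm]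
        exact_mod_cast h2.symm
    · rw [htw g x hx]
      exact Submodule.smul_mem _ _ (hch g x hx)
  · -- Part 2: injectivity
    intro h c₁ c₂ cτ _ _ _ _ ht1 ht2
    refine ext_of_homog 𝒜 fun g x hx => ?_
    have e : (τ h g : F) • c₁ x = (τ h g : F) • c₂ x := (ht1 g x hx).symm.trans (ht2 g x hx)
    exact smul_right_injective M (Units.ne_zero _) e
  · -- Part 3: surjectivity
    intro h c' hc' hch'
    set c : M →ₗ[F] M :=
      (DirectSum.toModule F G M fun g => (((τ h g)⁻¹ : Fˣ) : F) • (c' ∘ₗ (𝒜 g).subtype)) ∘ₗ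
        (DirectSum.decomposeLinearEquiv 𝒜).toLinearMap with hcdef
    have key : ∀ g : G, ∀ x ∈ 𝒜 g, c x = (((τ h g)⁻¹ : Fˣ) : F) • c' x := by
      intro g x hx
      show (DirectSum.toModule F G M fun g => (((τ h g)⁻¹ : Fˣ) : F) • (c' ∘ₗ (𝒜 g).subtype))
          ((DirectSum.decomposeLinearEquiv 𝒜) x) = _
      rw [DirectSum.decomposeLinearEquiv_apply,
        show (DirectSum.decompose 𝒜) x = DirectSum.of (fun i => 𝒜 i) g ⟨x, hx⟩ from
          DirectSum.decompose_coe 𝒜 ⟨x, hx⟩,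
        ← DirectSum.lof_eq_of F, DirectSum.toModule_lof]
      simp
    have htwist : IsTwistOf 𝒜 τ h c c' := by
      intro g x hx
      rw [key g x hx, smul_smul]
      have : ((τ h g : F)) * (((τ h g)⁻¹ : Fˣ) : F) = 1 := by
        rw [← Units.val_mul, mul_inv_cancel, Units.val_one]
      rw [this, one_smul]
    have hhom : IsHomogOfDeg 𝒜 h c := by
      intro g x hx
      rw [key g x hx]
      exact Submodule.smul_mem _ _ (hch' g x hx)
    refine ⟨c, isCentroid_of_homog 𝒜 mul c ?_, hhom, htwist⟩
    intro g₁ g₂ x hx y hy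
    have hxy := hgr g₁ g₂ x hx y hy
    have hcx' : c' x ∈ 𝒜 (h * g₁) := hch' g₁ x hx
    have hcy' : c' y ∈ 𝒜 (h * g₂) := hch' g₂ y hy
    constructor
    · have E : ((τ h (g₁ * g₂) : F) * (τ g₁ g₂ : F)) • c (mul x y) =
          ((τ (h * g₁) g₂ : F) * (τ h g₁ : F)) • mul (c x) y := by
        calc ((τ h (g₁ * g₂) : F) * (τ g₁ g₂ : F)) • c (mul x y)
            = (τ g₁ g₂ : F) • ((τ h (g₁ * g₂) : F) • c (mul x y)) := by
              rw [mul_comm, mul_smul]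
          _ = (τ g₁ g₂ : F) • c' (mul x y) := by rw [← htwist (g₁ * g₂) _ hxy]
          _ = c' (mulτ x y) := by rw [← map_smul, ← hτ g₁ g₂ x hx y hy]
          _ = mulτ (c' x) y := (hc' x y).1
          _ = (τ (h * g₁) g₂ : F) • mul (c' x) y := hτ (h * g₁) g₂ _ hcx' y hy
          _ = ((τ (h * g₁) g₂ : F) * (τ h g₁ : F)) • mul (c x) y := by
              rw [htwist g₁ x hx, map_smul, LinearMap.smul_apply, smul_smul]
      have st : ((τ h (g₁ * g₂) : F) * (τ g₁ g₂ : F)) =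
          ((τ (h * g₁) g₂ : F) * (τ h g₁ : F)) := by
        have h2 : τ h g₁ * τ (h * g₁) g₂ = τ h (g₁ * g₂) * τ g₁ g₂ := hcoc h g₁ g₂
        have := congrArg (Units.val) h2
        push_cast at this
        rw [← this, mul_comm]
      rw [st] at E
      exact smul_right_injective M
        (mul_ne_zero (Units.ne_zero _) (Units.ne_zero _)) E
    · have E : ((τ h (g₁ * g₂) : F) * (τ g₁ g₂ : F)) • c (mul x y) =
          ((τ g₁ (h * g₂) : F) * (τ h g₂ : F)) • mul x (c y) := by
        calc ((τ h (g₁ * g₂) : F) * (τ g₁ g₂ : F)) • c (mul x y)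
            = (τ g₁ g₂ : F) • ((τ h (g₁ * g₂) : F) • c (mul x y)) := by
              rw [mul_comm, mul_smul]
          _ = (τ g₁ g₂ : F) • c' (mul x y) := by rw [← htwist (g₁ * g₂) _ hxy]
          _ = c' (mulτ x y) := by rw [← map_smul, ← hτ g₁ g₂ x hx y hy]
          _ = mulτ x (c' y) := (hc' x y).2
          _ = (τ g₁ (h * g₂) : F) • mul x (c' y) := hτ g₁ (h * g₂) x hx _ hcy'
          _ = ((τ g₁ (h * g₂) : F) * (τ h g₂ : F)) • mul x (c y) := by
              rw [htwist g₂ y hy, map_smul, smul_smul]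
      have st : ((τ h (g₁ * g₂) : F) * (τ g₁ g₂ : F)) =
          ((τ g₁ (h * g₂) : F) * (τ h g₂ : F)) := by
        have h2 : τ g₁ (h * g₂) * τ h g₂ = τ h (g₁ * g₂) * τ g₁ g₂ := by
          rw [hsym g₁ (h * g₂), mul_comm (τ (h * g₂) g₁), hcoc h g₂ g₁, mul_comm g₂ g₁,
            hsym g₂ g₁]
        have := congrArg (Units.val) h2
        push_cast at this
        rw [this]
      rw [st] at E
      exact smul_right_injective M
        (mul_ne_zero (Units.ne_zero _) (Units.ne_zero _)) E
  · -- Part 4: multiplicativity up to twist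
    intro h₁ h₂ c₁ c₂ cτ₁ cτ₂ d _ _ hh1 hh2 ht1 ht2 htd
    refine ext_of_homog 𝒜 fun g x hx => ?_
    have hc2x : c₂ x ∈ 𝒜 (h₂ * g) := hh2 g x hx
    have lhs : (cτ₁ ∘ₗ cτ₂) x =
        ((τ h₂ g : F) * (τ h₁ (h₂ * g) : F)) • c₁ (c₂ x) := by
      rw [LinearMap.comp_apply, ht2 g x hx, map_smul, ht1 (h₂ * g) _ hc2x, smul_smul]
    have rhs : ((τ h₁ h₂ : F) • d) x =
        ((τ h₁ h₂ : F) * (τ (h₁ * h₂) g : F)) • c₁ (c₂ x) := by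
      rw [LinearMap.smul_apply, htd g x hx, smul_smul]
      rfl
    rw [lhs, rhs]
    congr 1
    have h2 : τ h₁ h₂ * τ (h₁ * h₂) g = τ h₁ (h₂ * g) * τ h₂ g := hcoc h₁ h₂ g
    have := congrArg (Units.val) h2
    push_cast at this
    rw [this, mul_comm]

end
end

section
/- Let G be an abelian group. For any symmetric 2-cocycle τ : G × G → ℝ^× there exists a character χ : G → S¹ (the unit circle in ℂ) such that for any choice of complex numbers z_g with z_g² = χ(g) for all g ∈ G, the map γ : G → ℂ^×, g ↦ z_g, has coboundary dγ taking values in {±1} ⊆ ℝ^×, and τ is cohomologous to dγ in H²_sym(G,ℝ^×). -/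
open Complex

noncomputable section

namespace RSC

instance : RootableBy ℂˣ ℕ :=
  RootableBy.mk (fun a n => if h : 0 < n then
      (Units.mk0 (IsAlgClosed.exists_pow_nat_eq (k := ℂ) (a : ℂ) h).choose
        (by
          intro h0
          have := (IsAlgClosed.exists_pow_nat_eq (k := ℂ) (a : ℂ) h).choose_spec
          rw [h0, zero_pow (by omega)] at this
          exact a.ne_zero this.symm))
    else 1)
    (fun a => by simp)
    (fun {n} a hn => by
      have h : 0 < n := Nat.pos_of_ne_zero hn
      ext
      simp only [dif_pos h, Units.val_pow_eq_pow_val, Units.val_mk0]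
      exact (IsAlgClosed.exists_pow_nat_eq (k := ℂ) (a : ℂ) h).choose_spec)

instance : RootableBy ℂˣ ℤ := Group.rootableByIntOfRootableByNat ℂˣ

instance {A : Type*} [Group A] [RootableBy A ℤ] : DivisibleBy (Additive A) ℤ where
  div a n := Additive.ofMul (RootableBy.root a.toMul n)
  div_zero a := congrArg Additive.ofMul (RootableBy.root_zero _)
  div_cancel {n} a hn := by
    rw [← ofMul_zpow]
    exact congrArg Additive.ofMul (RootableBy.root_cancel _ hn)


universe u

variable {G : Type*} [CommGroup G]

structure NC (G : Type*) [CommGroup G] where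
  σ : G → G → ℂˣ
  coc : ∀ g₁ g₂ g₃ : G, σ g₁ g₂ * σ (g₁ * g₂) g₃ = σ g₁ (g₂ * g₃) * σ g₂ g₃
  sym : ∀ g₁ g₂ : G, σ g₁ g₂ = σ g₂ g₁
  norm : σ 1 1 = 1

lemma NC.norm_left (c : NC G) (g : G) : c.σ 1 g = 1 := by
  have h := c.coc 1 1 g
  rw [one_mul, one_mul, c.norm, one_mul] at h
  have h2 : c.σ 1 g * c.σ 1 g = 1 * c.σ 1 g := by rw [one_mul]; exact h.symm
  exact mul_right_cancel h2

lemma NC.norm_right (c : NC G) (g : G) : c.σ g 1 = 1 := by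
  rw [c.sym, c.norm_left]

@[ext]
structure Ext (c : NC G) where
  g : G
  u : ℂˣ

instance (c : NC G) : CommGroup (Ext c) where
  mul x y := ⟨x.g * y.g, c.σ x.g y.g * x.u * y.u⟩
  one := ⟨1, 1⟩
  inv x := ⟨x.g⁻¹, (c.σ x.g x.g⁻¹ * x.u)⁻¹⟩
  mul_assoc x y z := by
    refine Ext.ext (mul_assoc _ _ _) ?_
    show c.σ (x.g * y.g) z.g * (c.σ x.g y.g * x.u * y.u) * z.u
      = c.σ x.g (y.g * z.g) * x.u * (c.σ y.g z.g * y.u * z.u)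
    have h := c.coc x.g y.g z.g
    ext
    have hc : (c.σ x.g y.g : ℂ) * c.σ (x.g * y.g) z.g
        = c.σ x.g (y.g * z.g) * c.σ y.g z.g := by exact_mod_cast congrArg Units.val h
    push_cast
    linear_combination ((x.u : ℂ) * y.u * z.u) * hc
  one_mul x := by
    refine Ext.ext (one_mul _) ?_
    show c.σ 1 x.g * 1 * x.u = x.u
    rw [c.norm_left, one_mul, one_mul]
  mul_one x := by
    refine Ext.ext (mul_one _) ?_
    show c.σ x.g 1 * x.u * 1 = x.u
    rw [c.norm_right, one_mul, mul_one]
  inv_mul_cancel x := by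
    refine Ext.ext (inv_mul_cancel _) ?_
    show c.σ x.g⁻¹ x.g * (c.σ x.g x.g⁻¹ * x.u)⁻¹ * x.u = 1
    rw [c.sym x.g⁻¹ x.g, mul_inv, mul_inv_cancel_left, inv_mul_cancel]
  mul_comm x y := by
    refine Ext.ext (mul_comm _ _) ?_
    show c.σ x.g y.g * x.u * y.u = c.σ y.g x.g * y.u * x.u
    rw [c.sym, mul_assoc, mul_comm x.u, mul_assoc]

def toExt (c : NC G) : ℂˣ →* Ext c where
  toFun a := ⟨1, a⟩
  map_one' := rfl
  map_mul' a b := by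
    refine Ext.ext (one_mul 1).symm ?_
    show a * b = c.σ 1 1 * a * b
    rw [c.norm, one_mul]

lemma exists_retraction {G : Type u} [CommGroup G] (c : NC G) :
    ∃ r : Ext c →* ℂˣ, ∀ a : ℂˣ, r ⟨1, a⟩ = a := by
  let A : AddCommGrpCat.{u} := AddCommGrpCat.of (Additive (ULift.{u} ℂˣ))
  let E : AddCommGrpCat.{u} := AddCommGrpCat.of (Additive (Ext c))
  let j : ULift.{u} ℂˣ →* Ext c := (toExt c).comp (MulEquiv.ulift).toMonoidHom
  let i0 : Additive (ULift.{u} ℂˣ) →+ Additive (Ext c) := MonoidHom.toAdditive j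
  let i : A ⟶ E := AddCommGrpCat.ofHom i0
  haveI : CategoryTheory.Mono i := by
    rw [AddCommGrpCat.mono_iff_injective]
    intro a b h
    have h2 := congrArg Ext.u (congrArg Additive.toMul h)
    exact congrArg (fun x : ℂˣ => Additive.ofMul (ULift.up x)) h2
  haveI : CategoryTheory.Injective A := AddCommGrpCat.injective_of_divisible _
  let r0 : E ⟶ A := CategoryTheory.Injective.factorThru (CategoryTheory.CategoryStruct.id A) i
  have hr0 : CategoryTheory.CategoryStruct.comp i r0 = CategoryTheory.CategoryStruct.id A :=
    CategoryTheory.Injective.comp_factorThru _ _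
  refine ⟨(MulEquiv.ulift).toMonoidHom.comp (MonoidHom.toAdditive.symm r0.hom), fun a => ?_⟩
  have := congrArg Additive.toMul (congrFun (congrArg (fun f => DFunLike.coe (AddCommGrpCat.Hom.hom f)) hr0) (Additive.ofMul (ULift.up a)))
  exact congrArg ULift.down this

lemma exists_trivialization {G : Type u} [CommGroup G] (σ : G → G → ℂˣ)
    (hcoc : ∀ g₁ g₂ g₃ : G, σ g₁ g₂ * σ (g₁ * g₂) g₃ = σ g₁ (g₂ * g₃) * σ g₂ g₃)
    (hsym : ∀ g₁ g₂ : G, σ g₁ g₂ = σ g₂ g₁) :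
    ∃ f : G → ℂˣ, ∀ g h : G, σ g h = f g * f h * (f (g * h))⁻¹ := by
  set c0 := σ 1 1 with hc0
  have hcval : (c0 : ℂ) ≠ 0 := c0.ne_zero
  let nc : NC G :=
    { σ := fun g h => σ g h * c0⁻¹
      coc := by
        intro g₁ g₂ g₃
        have h := congrArg Units.val (hcoc g₁ g₂ g₃)
        push_cast at h
        ext
        push_cast
        field_simp
        linear_combination h
      sym := by intro g₁ g₂; show σ g₁ g₂ * c0⁻¹ = σ g₂ g₁ * c0⁻¹; rw [hsym]
      norm := by show σ 1 1 * c0⁻¹ = 1; rw [← hc0]; exact mul_inv_cancel c0 }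
  obtain ⟨r, hr⟩ := exists_retraction nc
  refine ⟨fun g => r ⟨g, 1⟩ * c0, fun g h => ?_⟩
  have e1 : (⟨g, 1⟩ : Ext nc) * (⟨h, 1⟩ : Ext nc)
      = (⟨1, nc.σ g h⟩ : Ext nc) * (⟨g * h, 1⟩ : Ext nc) := by
    refine Ext.ext ?_ ?_
    · show g * h = 1 * (g * h); rw [one_mul]
    · show nc.σ g h * 1 * 1 = nc.σ 1 (g * h) * nc.σ g h * 1
      rw [nc.norm_left, one_mul, mul_one, mul_one]
  have key := congrArg r e1
  rw [map_mul, map_mul, hr] at key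
  have keyv := congrArg Units.val key
  push_cast at keyv
  ext
  push_cast
  field_simp at keyv ⊢
  have hnc : (nc.σ g h : ℂ) * c0 = σ g h := by
    show ((σ g h * c0⁻¹ * c0 : ℂˣ) : ℂ) = σ g h
    rw [inv_mul_cancel_right]
  linear_combination -(c0 : ℂ) * keyv - ((r ⟨g * h, 1⟩ : ℂˣ) : ℂ) * hnc

end RSC

/-- For any symmetric 2-cocycle `τ : G × G → ℝ^×` there is a character `χ : G → S¹` such
that, for any choice of square roots `z_g` of `χ(g)`, the coboundary of `γ : g ↦ z_g`
takes values in `{±1} ⊆ ℝ^×` and is cohomologous to `τ` in `H²_sym(G,ℝ^×)`. -/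
theorem real_symmetric_cocycle_from_character {G : Type*} [CommGroup G]
    (τ : G → G → ℝˣ)
    (hcoc : ∀ g₁ g₂ g₃ : G, τ g₁ g₂ * τ (g₁ * g₂) g₃ = τ g₁ (g₂ * g₃) * τ g₂ g₃)
    (hsym : ∀ g₁ g₂ : G, τ g₁ g₂ = τ g₂ g₁) :
    ∃ χ : G →* Circle, ∀ z : G → ℂ, (∀ g : G, z g ^ 2 = (χ g : ℂ)) →
      (∀ g₁ g₂ : G, z g₁ * z g₂ * (z (g₁ * g₂))⁻¹ = 1 ∨
        z g₁ * z g₂ * (z (g₁ * g₂))⁻¹ = -1) ∧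
      ∃ η : G → ℝˣ, ∀ g₁ g₂ : G,
        ((τ g₁ g₂ : ℝ) : ℂ) = (z g₁ * z g₂ * (z (g₁ * g₂))⁻¹) *
          (((η g₁ * η g₂ * (η (g₁ * g₂))⁻¹ : ℝˣ) : ℝ) : ℂ) := by
  classical
  -- complexify the cocycle
  let σ : G → G → ℂˣ := fun g h => Units.map Complex.ofRealHom.toMonoidHom (τ g h)
  obtain ⟨f, hf⟩ := RSC.exists_trivialization σ
    (by
      intro g₁ g₂ g₃
      show Units.map _ (τ g₁ g₂) * Units.map _ (τ (g₁*g₂) g₃)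
        = Units.map _ (τ g₁ (g₂*g₃)) * Units.map _ (τ g₂ g₃)
      rw [← map_mul, ← map_mul, hcoc])
    (by
      intro g₁ g₂
      show Units.map _ (τ g₁ g₂) = Units.map _ (τ g₂ g₁)
      rw [hsym])
  have hfne : ∀ g : G, (f g : ℂ) ≠ 0 := fun g => Units.ne_zero _
  -- the key multiplicative relation in ℂ
  have key : ∀ g h : G, ((τ g h : ℝ) : ℂ) * (f (g * h) : ℂ) = (f g : ℂ) * (f h : ℂ) := by
    intro g h
    have this0 := congrArg Units.val (hf g h)
    push_cast at this0
    have hσv : (σ g h : ℂ) = ((τ g h : ℝ) : ℂ) := rfl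
    rw [hσv] at this0
    have h3 := hfne (g * h)
    field_simp at this0
    linear_combination this0
  set m : G → ℝ := fun g => ‖(f g : ℂ)‖ with hm_def
  have hmpos : ∀ g, 0 < m g := fun g => norm_pos_iff.mpr (hfne g)
  have hmne : ∀ g, ((m g : ℝ) : ℂ) ≠ 0 := fun g => by
    exact_mod_cast Complex.ofReal_ne_zero.mpr (hmpos g).ne'
  -- squared modulus relation
  have keym : ∀ g h : G, (((m g : ℝ) : ℂ) * ((m h : ℝ) : ℂ)) ^ 2
      = ((τ g h : ℝ) : ℂ) ^ 2 * ((m (g * h) : ℝ) : ℂ) ^ 2 := by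
    intro g h
    have habs := congrArg (‖·‖) (key g h)
    rw [norm_mul, norm_mul, Complex.norm_real, Real.norm_eq_abs] at habs
    have hr : (m g * m h) ^ 2 = (τ g h : ℝ) ^ 2 * m (g * h) ^ 2 := by
      have h2 := congrArg (· ^ 2) habs
      rw [← _root_.sq_abs ((τ g h : ℝ))]
      linear_combination -h2
    exact_mod_cast congrArg (fun x : ℝ => (x : ℂ)) hr
  have keyf : ∀ g h : G, ((f g : ℂ) * (f h : ℂ)) ^ 2
      = ((τ g h : ℝ) : ℂ) ^ 2 * (f (g * h) : ℂ) ^ 2 := by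
    intro g h
    rw [← key g h]; ring
  -- the character
  have hmem : ∀ g : G, (f g : ℂ) ^ 2 / ((m g : ℝ) : ℂ) ^ 2 ∈ Submonoid.unitSphere ℂ := by
    intro g
    have : ‖(f g : ℂ) ^ 2 / ((m g : ℝ) : ℂ) ^ 2‖ = 1 := by
      rw [norm_div, norm_pow, norm_pow,
        Complex.norm_real, Real.norm_eq_abs, abs_of_pos (hmpos g)]
      rw [div_self (pow_ne_zero 2 (hmpos g).ne')]
    exact mem_sphere_zero_iff_norm.mpr this
  have hfone : (f 1 : ℂ) = ((τ 1 1 : ℝ) : ℂ) := by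
    have h2 := key 1 1
    rw [one_mul] at h2
    exact (mul_right_cancel₀ (hfne 1) h2).symm
  let χ : G →* Circle :=
    { toFun := fun g => ⟨(f g : ℂ) ^ 2 / ((m g : ℝ) : ℂ) ^ 2, hmem g⟩
      map_one' := by
        ext
        show (f 1 : ℂ) ^ 2 / ((m 1 : ℝ) : ℂ) ^ 2 = 1
        have hm1 : m 1 = |(τ 1 1 : ℝ)| := by
          show ‖(f 1 : ℂ)‖ = _
          rw [hfone, Complex.norm_real, Real.norm_eq_abs]
        rw [div_eq_one_iff_eq (pow_ne_zero 2 (hmne 1)), hfone, hm1]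
        norm_cast
        rw [_root_.sq_abs]
        push_cast
        ring
      map_mul' := by
        intro g h
        ext
        show (f (g * h) : ℂ) ^ 2 / ((m (g * h) : ℝ) : ℂ) ^ 2
          = ((f g : ℂ) ^ 2 / ((m g : ℝ) : ℂ) ^ 2) * ((f h : ℂ) ^ 2 / ((m h : ℝ) : ℂ) ^ 2)
        have h1 := keym g h
        have h2 := keyf g h
        field_simp [hmne g, hmne h, hmne (g*h)]
        linear_combination ((f (g*h) : ℂ))^2 * h1 - ((m (g*h) :ℝ):ℂ)^2 * h2 }
  have hχval : ∀ g : G, (χ g : ℂ) = (f g : ℂ) ^ 2 / ((m g : ℝ) : ℂ) ^ 2 := fun g => rfl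
  refine ⟨χ, fun z hz => ?_⟩
  -- basic facts about z
  have hzne : ∀ g : G, z g ≠ 0 := by
    intro g hzero
    have := hz g
    rw [hzero] at this
    exact Circle.coe_ne_zero (χ g) (by rw [← this]; ring)
  constructor
  · -- coboundary is ±1
    intro g₁ g₂
    have hmc : (χ (g₁ * g₂) : ℂ) = (χ g₁ : ℂ) * (χ g₂ : ℂ) := by
      rw [map_mul]; rfl
    have hsq : (z g₁ * z g₂ * (z (g₁ * g₂))⁻¹) ^ 2 = 1 := by
      rw [mul_pow, mul_pow, inv_pow, hz, hz, hz, ← hmc]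
      exact mul_inv_cancel₀ (χ (g₁ * g₂)).coe_ne_zero
    have hfac : (z g₁ * z g₂ * (z (g₁ * g₂))⁻¹ - 1) * (z g₁ * z g₂ * (z (g₁ * g₂))⁻¹ + 1) = 0 := by
      linear_combination hsq
    rcases mul_eq_zero.mp hfac with h | h
    · exact Or.inl (by linear_combination h)
    · exact Or.inr (by linear_combination h)
  · -- the cohomologous relation
    -- square roots z₀
    set z₀ : G → ℂ := fun g => (f g : ℂ) / ((m g : ℝ) : ℂ) with hz₀_def
    have hz₀sq : ∀ g, z₀ g ^ 2 = (χ g : ℂ) := by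
      intro g
      rw [hχval, hz₀_def]
      simp only
      rw [div_pow]
    have hz₀ne : ∀ g, z₀ g ≠ 0 := fun g => div_ne_zero (hfne g) (hmne g)
    set e : G → ℝˣ := fun g => if z g = z₀ g then 1 else -1 with he_def
    have he : ∀ g, z g = (((e g : ℝˣ) : ℝ) : ℂ) * z₀ g := by
      intro g
      by_cases hcase : z g = z₀ g
      · simp only [he_def, if_pos hcase]
        push_cast
        rw [one_mul]; exact hcase
      · have hfac : (z g - z₀ g) * (z g + z₀ g) = 0 := by
          linear_combination hz g - hz₀sq g
        rcases mul_eq_zero.mp hfac with h | h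
        · exact absurd (by linear_combination h) hcase
        · simp only [he_def, if_neg hcase]
          push_cast
          linear_combination h
      
    have hesq : ∀ g, (((e g : ℝˣ) : ℝ) : ℂ) * (((e g : ℝˣ) : ℝ) : ℂ) = 1 := by
      intro g
      simp only [he_def]
      split <;> norm_num
    refine ⟨fun g => e g * Units.mk0 (m g) (hmpos g).ne', fun g₁ g₂ => ?_⟩
    have hηval : ((e g₁ * Units.mk0 (m g₁) (hmpos g₁).ne' * (e g₂ * Units.mk0 (m g₂) (hmpos g₂).ne')
        * (e (g₁*g₂) * Units.mk0 (m (g₁*g₂)) (hmpos (g₁*g₂)).ne')⁻¹ : ℝˣ) : ℝ)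
        = ((e g₁ : ℝ) * m g₁) * ((e g₂ : ℝ) * m g₂) * (((e (g₁*g₂) : ℝ)) * m (g₁*g₂))⁻¹ := by
      simp only [Units.val_mul, Units.val_inv_eq_inv_val, Units.val_mk0, mul_inv]
      try ring
    rw [he g₁, he g₂, he (g₁ * g₂), hηval]
    simp only [hz₀_def]
    have k := key g₁ g₂
    have q1 := hesq g₁
    have q2 := hesq g₂
    have q3 := hesq (g₁ * g₂)
    have hene : ∀ g, (((e g : ℝˣ) : ℝ) : ℂ) ≠ 0 := by
      intro g
      simp only [he_def]
      split <;> norm_num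
    push_cast
    field_simp
    rw [eq_div_iff (mul_ne_zero (mul_ne_zero (hmne g₁) (hmne g₂)) (hmne (g₁*g₂)))]
    linear_combination (((τ g₁ g₂ : ℝ) : ℂ) * ((m g₁ : ℝ):ℂ) * ((m g₂ : ℝ):ℂ) * ((m (g₁*g₂) : ℝ):ℂ)
        * (f (g₁*g₂) : ℂ)) * q3
      - ((f g₁ : ℂ) * (f g₂ : ℂ) * ((m g₁ : ℝ):ℂ) * ((m g₂ : ℝ):ℂ) * ((m (g₁*g₂) : ℝ):ℂ)
        * (((e g₂ : ℝˣ) : ℝ) : ℂ) * (((e g₂ : ℝˣ) : ℝ) : ℂ)) * q1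
      - ((f g₁ : ℂ) * (f g₂ : ℂ) * ((m g₁ : ℝ):ℂ) * ((m g₂ : ℝ):ℂ) * ((m (g₁*g₂) : ℝ):ℂ)) * q2
      + (((m g₁ : ℝ):ℂ) * ((m g₂ : ℝ):ℂ) * ((m (g₁*g₂) : ℝ):ℂ)) * k
end
end

section
/- Let G be an abelian group, H a subgroup, π : G → Ḡ = G/H the projection, A a Ḡ-graded algebra over a field F, and τ : G × G → F^× a symmetric 2-cocycle whose restriction to H × H is trivial modulo coboundaries pulled back from Ḡ in the following sense: τ = μ∘(π×π) for some symmetric 2-cocycle μ on Ḡ. Then the twisted loop algebra L_π^τ(A) is isomorphic as a G-graded algebra to the (untwisted) loop algebra L_π(A^μ) of the μ-twist of A. -/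
open DirectSum

/-- If `τ = μ∘(π×π)` for a symmetric 2-cocycle `μ` on `Ḡ = G/H`, then the twisted loop
algebra `L_π^τ(A)` is graded-isomorphic to the untwisted loop algebra `L_π(A^μ)`.
The loop algebra `L_π(A) = ⊕_{g∈G} A_{π(g)} ⊗ g` is modelled as `⨁ (g : G), A_{π(g)}`. -/
theorem twisted_loop_iso_loop_of_twist {G F M : Type*} [CommGroup G] [DecidableEq G]
    [Field F] [AddCommGroup M] [Module F M]
    (H : Subgroup G) (𝒜 : G ⧸ H → Submodule F M)
    (mul : M →ₗ[F] M →ₗ[F] M)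
    (hgr : ∀ a b : G ⧸ H, ∀ x ∈ 𝒜 a, ∀ y ∈ 𝒜 b, mul x y ∈ 𝒜 (a * b))
    (μ : G ⧸ H → G ⧸ H → Fˣ)
    (hμcoc : ∀ a b c : G ⧸ H, μ a b * μ (a * b) c = μ a (b * c) * μ b c)
    (hμsym : ∀ a b : G ⧸ H, μ a b = μ b a)
    (τ : G → G → Fˣ)
    (hτμ : ∀ g₁ g₂ : G, τ g₁ g₂ = μ (g₁ : G ⧸ H) (g₂ : G ⧸ H))
    -- the multiplication of the τ-twisted loop algebra `L_π^τ(A)`: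
    (mulLτ : (⨁ g : G, 𝒜 (g : G ⧸ H)) →ₗ[F] (⨁ g : G, 𝒜 (g : G ⧸ H)) →ₗ[F]
      (⨁ g : G, 𝒜 (g : G ⧸ H)))
    (hLτ : ∀ (g₁ g₂ : G) (x : 𝒜 (g₁ : G ⧸ H)) (y : 𝒜 (g₂ : G ⧸ H))
      (z : 𝒜 ((g₁ * g₂ : G) : G ⧸ H)), (z : M) = (τ g₁ g₂ : F) • mul x y →
      mulLτ (DirectSum.of (fun g : G => 𝒜 (g : G ⧸ H)) g₁ x)
          (DirectSum.of (fun g : G => 𝒜 (g : G ⧸ H)) g₂ y) =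
        DirectSum.of (fun g : G => 𝒜 (g : G ⧸ H)) (g₁ * g₂) z)
    -- the multiplication of the untwisted loop algebra `L_π(A^μ)`:
    (mulLμ : (⨁ g : G, 𝒜 (g : G ⧸ H)) →ₗ[F] (⨁ g : G, 𝒜 (g : G ⧸ H)) →ₗ[F]
      (⨁ g : G, 𝒜 (g : G ⧸ H)))
    (hLμ : ∀ (g₁ g₂ : G) (x : 𝒜 (g₁ : G ⧸ H)) (y : 𝒜 (g₂ : G ⧸ H))
      (z : 𝒜 ((g₁ * g₂ : G) : G ⧸ H)),
      (z : M) = (μ (g₁ : G ⧸ H) (g₂ : G ⧸ H) : F) • mul x y →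
      mulLμ (DirectSum.of (fun g : G => 𝒜 (g : G ⧸ H)) g₁ x)
          (DirectSum.of (fun g : G => 𝒜 (g : G ⧸ H)) g₂ y) =
        DirectSum.of (fun g : G => 𝒜 (g : G ⧸ H)) (g₁ * g₂) z) :
    ∃ φ : (⨁ g : G, 𝒜 (g : G ⧸ H)) ≃ₗ[F] (⨁ g : G, 𝒜 (g : G ⧸ H)),
      (∀ (g : G) (x : 𝒜 (g : G ⧸ H)), ∃ y : 𝒜 (g : G ⧸ H),
        φ (DirectSum.of (fun g : G => 𝒜 (g : G ⧸ H)) g x) =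
          DirectSum.of (fun g : G => 𝒜 (g : G ⧸ H)) g y) ∧
      (∀ a b : ⨁ g : G, 𝒜 (g : G ⧸ H), φ (mulLτ a b) = mulLμ (φ a) (φ b)) := by
  have hmul : mulLτ = mulLμ := by
    ext g₁ x g₂ y : 4
    have hz : (mul x y : M) ∈ 𝒜 ((g₁ * g₂ : G) : G ⧸ H) := by
      have := hgr (g₁ : G ⧸ H) (g₂ : G ⧸ H) x x.2 y y.2
      simpa using this
    set z : 𝒜 ((g₁ * g₂ : G) : G ⧸ H) :=
      ⟨(μ (g₁ : G ⧸ H) (g₂ : G ⧸ H) : F) • mul x y,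
        Submodule.smul_mem _ _ hz⟩ with hzdef
    have h1 := hLτ g₁ g₂ x y z (by rw [hτμ])
    have h2 := hLμ g₁ g₂ x y z rfl
    exact h1.trans h2.symm
  refine ⟨LinearEquiv.refl F _, fun g x => ⟨x, rfl⟩, fun a b => ?_⟩
  simp [hmul]
end
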